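/- Let μ be a Borel measure on (0,∞) with ∫_{(0,∞)} e^{-xr} dμ(x) < ∞ for every r > 0, let c₀ ≥ 0, and let K(r) = c₀ + ∫_{(0,∞)} e^{-xr} dμ(x). Then for every h > 0, ∫_0^h K(r)² dr ≥ (1 − e^{-1})² · h · μ((0, 1/h])². -/

import Mathlib

open Real MeasureTheory

private lemma cs_sq_lintegral {α : Type*} [MeasurableSpace α] (ν : Measure α)
    {f : α → ENNReal} (hf : AEMeasurable f ν) :
    (∫⁻ a, f a ∂ν) ^ 2 ≤ (∫⁻ a, f a ^ 2 ∂ν) * ν Set.univ := by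
  have hpq : Real.HolderConjugate 2 2 := Real.HolderConjugate.two_two
  have h := ENNReal.lintegral_mul_le_Lp_mul_Lq ν hpq hf aemeasurable_const (g := fun _ => 1)
  simp only [Pi.mul_apply, mul_one, ENNReal.one_rpow, lintegral_one] at h
  calc (∫⁻ a, f a ∂ν) ^ 2
      ≤ ((∫⁻ a, f a ^ (2:ℝ) ∂ν) ^ (1/(2:ℝ)) * (ν Set.univ) ^ (1/(2:ℝ))) ^ 2 :=
        pow_le_pow_left₀ zero_le h 2
    _ = (∫⁻ a, f a ^ 2 ∂ν) * ν Set.univ := by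
        rw [mul_pow, ← ENNReal.rpow_natCast _ 2, ← ENNReal.rpow_natCast _ 2,
          ← ENNReal.rpow_mul, ← ENNReal.rpow_mul]
        norm_num

private lemma conv_ineq {t : ℝ} (ht0 : 0 < t) (ht1 : t ≤ 1) :
    t * (1 - Real.exp (-1)) ≤ 1 - Real.exp (-t) := by
  have h := convexOn_exp.2 (Set.mem_univ (0:ℝ)) (Set.mem_univ (-1:ℝ))
    (by linarith : (0:ℝ) ≤ 1 - t) ht0.le (by ring)
  simp only [smul_eq_mul, mul_zero, mul_neg, mul_one, zero_add, Real.exp_zero] at h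
  nlinarith [h]

theorem kernel_L2_lower_bound (μ : Measure ℝ) (c₀ : ℝ) (hc₀ : 0 ≤ c₀)
    (hint : ∀ r : ℝ, 0 < r → IntegrableOn (fun x => Real.exp (-(x * r))) (Set.Ioi 0) μ)
    (K : ℝ → ℝ) (hK : ∀ r : ℝ, 0 < r → K r = c₀ + ∫ x in Set.Ioi 0, Real.exp (-(x * r)) ∂μ)
    (h : ℝ) (hh : 0 < h) :
    ENNReal.ofReal ((1 - Real.exp (-1)) ^ 2 * h) * μ (Set.Ioc 0 (1 / h)) ^ 2 ≤
      ∫⁻ r in Set.Ioc 0 h, ENNReal.ofReal (K r ^ 2) := by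
  set A : Set ℝ := Set.Ioc 0 (1 / h) with hA
  -- μ A < ∞
  have hμA : μ A < ⊤ := by
    have hi : IntegrableOn (fun x => Real.exp (-(x * h))) A μ :=
      (hint h hh).mono_set Set.Ioc_subset_Ioi_self
    have hlt := hi.measure_ge_lt_top (Real.exp_pos (-1))
    refine lt_of_le_of_lt ?_ hlt
    rw [← Measure.restrict_apply_self]
    refine measure_mono fun x hx => ?_
    have hx1 : x * h ≤ 1 := by
      rw [← le_div_iff₀ hh]; exact hx.2
    exact Real.exp_le_exp.2 (by linarith)
  haveI : Fact (μ A < ⊤) := ⟨hμA⟩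
  -- the comparison function g
  set F : ℝ → ℝ → ENNReal := fun x r => ENNReal.ofReal (Real.exp (-(x * r))) with hF
  have hFcont : Continuous fun p : ℝ × ℝ => Real.exp (-(p.1 * p.2)) :=
    Real.continuous_exp.comp ((continuous_fst.mul continuous_snd).neg)
  have hFmeas : Measurable (Function.uncurry F) :=
    ENNReal.measurable_ofReal.comp hFcont.measurable
  set g : ℝ → ENNReal := fun r => ∫⁻ x in A, F x r ∂μ with hg
  have hgmeas : Measurable g := hFmeas.lintegral_prod_left
  -- Step 1: g r ≤ ofReal (K r) for r ∈ Ioc 0 h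
  have step1 : ∀ r ∈ Set.Ioc (0:ℝ) h, g r ≤ ENNReal.ofReal (K r) := by
    intro r hr
    have hir : IntegrableOn (fun x => Real.exp (-(x * r))) A μ :=
      (hint r hr.1).mono_set Set.Ioc_subset_Ioi_self
    have hge : g r = ENNReal.ofReal (∫ x in A, Real.exp (-(x * r)) ∂μ) :=
      (ofReal_integral_eq_lintegral_ofReal hir
        (ae_of_all _ fun x => (Real.exp_pos _).le)).symm
    rw [hge, hK r hr.1]
    apply ENNReal.ofReal_le_ofReal
    have hmono : (∫ x in A, Real.exp (-(x * r)) ∂μ) ≤ ∫ x in Set.Ioi 0, Real.exp (-(x * r)) ∂μ :=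
      setIntegral_mono_set (hint r hr.1) (ae_of_all _ fun x => (Real.exp_pos _).le)
        (HasSubset.Subset.eventuallyLE Set.Ioc_subset_Ioi_self)
    linarith
  -- Step 2: lower bound for ∫⁻ g
  have step2 : ENNReal.ofReal (h * (1 - Real.exp (-1))) * μ A ≤
      ∫⁻ r in Set.Ioc 0 h, g r := by
    have hswap : ∫⁻ r in Set.Ioc 0 h, g r = ∫⁻ x in A, ∫⁻ r in Set.Ioc 0 h, F x r ∂volume ∂μ := by
      refine (lintegral_lintegral_swap ?_).symm
      exact hFmeas.aemeasurable
    rw [hswap]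
    have inner_bound : ∀ x ∈ A, ENNReal.ofReal (h * (1 - Real.exp (-1))) ≤
        ∫⁻ r in Set.Ioc 0 h, F x r ∂volume := by
      intro x hx
      have hx0 : 0 < x := hx.1
      have hxh : x * h ≤ 1 := by rw [← le_div_iff₀ hh]; exact hx.2
      have hic : IntegrableOn (fun r => Real.exp (-(x * r))) (Set.Ioc 0 h) volume :=
        (Real.continuous_exp.comp ((continuous_const.mul continuous_id).neg)).integrableOn_Ioc
      have heq : (∫⁻ r in Set.Ioc 0 h, F x r ∂volume) =
          ENNReal.ofReal (∫ r in Set.Ioc 0 h, Real.exp (-(x * r)) ∂volume) :=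
        (ofReal_integral_eq_lintegral_ofReal hic
          (ae_of_all _ fun r => (Real.exp_pos _).le)).symm
      rw [heq]
      apply ENNReal.ofReal_le_ofReal
      have hval : (∫ r in Set.Ioc 0 h, Real.exp (-(x * r)) ∂volume) =
          (1 - Real.exp (-(x * h))) / x := by
        rw [← intervalIntegral.integral_of_le hh.le]
        have : ∀ r : ℝ, Real.exp (-(x * r)) = Real.exp ((-x) * r) := by
          intro r; ring_nf
        simp_rw [this]
        rw [intervalIntegral.integral_comp_mul_left Real.exp (show (-x) ≠ 0 by linarith),
          integral_exp]
        rw [mul_zero, Real.exp_zero, smul_eq_mul]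
        field_simp
        ring_nf
      rw [hval]
      rw [le_div_iff₀ hx0]
      have := conv_ineq (mul_pos hx0 hh) hxh
      nlinarith
    calc ENNReal.ofReal (h * (1 - Real.exp (-1))) * μ A
        = ∫⁻ _ in A, ENNReal.ofReal (h * (1 - Real.exp (-1))) ∂μ := by
          rw [setLIntegral_const]
      _ ≤ ∫⁻ x in A, ∫⁻ r in Set.Ioc 0 h, F x r ∂volume ∂μ :=
          setLIntegral_mono' measurableSet_Ioc inner_bound
  -- Step 3: Cauchy-Schwarz
  have hKnn : ∀ r ∈ Set.Ioc (0:ℝ) h, 0 ≤ K r := by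
    intro r hr
    rw [hK r hr.1]
    have : 0 ≤ ∫ x in Set.Ioi 0, Real.exp (-(x * r)) ∂μ :=
      integral_nonneg fun x => (Real.exp_pos _).le
    linarith
  have hg2 : ∫⁻ r in Set.Ioc 0 h, g r ^ 2 ≤ ∫⁻ r in Set.Ioc 0 h, ENNReal.ofReal (K r ^ 2) := by
    refine setLIntegral_mono' measurableSet_Ioc fun r hr => ?_
    have := step1 r hr
    calc g r ^ 2 ≤ ENNReal.ofReal (K r) ^ 2 := pow_le_pow_left₀ zero_le this 2
      _ = ENNReal.ofReal (K r ^ 2) := by rw [← ENNReal.ofReal_pow (hKnn r hr)]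
  have hcs := cs_sq_lintegral (volume.restrict (Set.Ioc 0 h)) hgmeas.aemeasurable
  rw [Measure.restrict_apply_univ, Real.volume_Ioc, sub_zero] at hcs
  have chain : (ENNReal.ofReal (h * (1 - Real.exp (-1))) * μ A) ^ 2 ≤
      (∫⁻ r in Set.Ioc 0 h, ENNReal.ofReal (K r ^ 2)) * ENNReal.ofReal h :=
    le_trans (pow_le_pow_left₀ zero_le step2 2)
      (le_trans hcs (mul_le_mul_left hg2 _))
  have hexp : (ENNReal.ofReal (h * (1 - Real.exp (-1))) * μ A) ^ 2 =
      (ENNReal.ofReal ((1 - Real.exp (-1)) ^ 2 * h) * μ A ^ 2) * ENNReal.ofReal h := by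
    have he1 : (0:ℝ) ≤ 1 - Real.exp (-1) := by
      have : Real.exp (-1) < 1 := Real.exp_lt_one_iff.2 (by norm_num)
      linarith
    rw [mul_pow, ← ENNReal.ofReal_pow (by positivity),
      show (h * (1 - Real.exp (-1))) ^ 2 = ((1 - Real.exp (-1)) ^ 2 * h) * h from by ring,
      ENNReal.ofReal_mul (by positivity), mul_right_comm]
  rw [hexp] at chain
  exact (ENNReal.mul_le_mul_iff_left (c := ENNReal.ofReal h)
    (ENNReal.ofReal_pos.2 hh).ne' ENNReal.ofReal_ne_top).mp chain
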